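/- In B_3, the elements Δ₃² = (σ₁σ₂)³ and σ₁ commute, and the map ℤ × ℤ → B_3 sending (u,v) to Δ₃^{2u} σ₁^v is an injective group homomorphism whose image is the centralizer of B_2 in B_3. -/

import Mathlib

/-- The braid relations on generators indexed by `Fin m` (generator `i` is `σ_{i+1}`). -/
def braidRels (m : ℕ) : Set (FreeGroup (Fin m)) :=
  {r | (∃ i j : Fin m, (i : ℕ) + 1 < (j : ℕ) ∧
        r = FreeGroup.of i * FreeGroup.of j * (FreeGroup.of i)⁻¹ * (FreeGroup.of j)⁻¹) ∨
       (∃ i j : Fin m, (i : ℕ) + 1 = (j : ℕ) ∧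
        r = FreeGroup.of i * FreeGroup.of j * FreeGroup.of i *
            (FreeGroup.of j * FreeGroup.of i * FreeGroup.of j)⁻¹)}

/-- The Artin braid group `B_n`, presented with generators `σ₁, …, σ_{n-1}`. -/
abbrev BraidGroup (n : ℕ) := PresentedGroup (braidRels (n - 1))

/-- The Artin generator; `braidGen i` represents `σ_{i+1}`. -/
def braidGen {n : ℕ} (i : Fin (n - 1)) : BraidGroup n := PresentedGroup.of i

/-- `σ_k` (1-indexed), or `1` if out of range. -/
def sigma' (n k : ℕ) : BraidGroup n :=
  if h : k - 1 < n - 1 then braidGen ⟨k - 1, h⟩ else 1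

/-- A braid is `i`-positive (`i : Fin (n-1)` standing for `σ_{i+1}`) if it is represented by
a word using only generators of index ≤ i, in which generator `i` occurs, and only with
positive exponent. -/
def IsIPositive {n : ℕ} (β : BraidGroup n) (i : Fin (n - 1)) : Prop :=
  ∃ w : FreeGroup (Fin (n - 1)), PresentedGroup.mk (braidRels (n - 1)) w = β ∧
    (∀ l ∈ w.toWord, l.1 ≤ i ∧ (l.1 = i → l.2 = true)) ∧ (∃ l ∈ w.toWord, l.1 = i)

/-- A braid is `i`-negative if its inverse is `i`-positive. -/
def IsINegative {n : ℕ} (β : BraidGroup n) (i : Fin (n - 1)) : Prop :=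
  IsIPositive β⁻¹ i

/-- Dehornoy-positive braids: `i`-positive for some `i`. -/
def DPos {n : ℕ} (β : BraidGroup n) : Prop := ∃ i, IsIPositive β i

/-- The Dehornoy ordering on `B_n`. -/
def DLt {n : ℕ} (a b : BraidGroup n) : Prop := DPos (a⁻¹ * b)

/-- The copy of `B_r` inside `B_n` generated by `σ₁, …, σ_{r-1}`. -/
def braidSub (n r : ℕ) : Subgroup (BraidGroup n) :=
  Subgroup.closure {β | ∃ i : Fin (n - 1), (i : ℕ) < r - 1 ∧ β = braidGen i}

/-- `σ_a σ_{a-1} ⋯ σ_b` (1-indexed). -/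
def descSeg (n a b : ℕ) : BraidGroup n :=
  (((List.range (a - b + 1)).map fun j => sigma' n (a - j)).prod)

/-- The Garside half twist `Δ_k = (σ_{k-1}⋯σ₁)(σ_{k-1}⋯σ₂)⋯(σ_{k-1}σ_{k-2})(σ_{k-1})`
viewed in `B_n`. -/
def Delta (n k : ℕ) : BraidGroup n :=
  (((List.range (k - 1)).map fun m => descSeg n (k - 1) (m + 1)).prod)


open Matrix

namespace Stmt13

abbrev SL2 := Matrix.SpecialLinearGroup (Fin 2) ℤ
def Sm : SL2 := ModularGroup.S
def Rm : SL2 := ⟨!![0,-1;1,-1], by simp [Matrix.det_fin_two_of]⟩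
@[simp] lemma coe_Rm : (Rm : Matrix (Fin 2) (Fin 2) ℤ) = !![0,-1;1,-1] := rfl
@[simp] lemma coe_Sm : (Sm : Matrix (Fin 2) (Fin 2) ℤ) = !![0,-1;1,0] := ModularGroup.coe_S

-- letters
inductive Letter | A | B1 | B2
  deriving DecidableEq
open Letter

def typ : Letter → Bool | A => false | B1 => true | B2 => true

def diff (a b : Letter) : Prop := typ a ≠ typ b

def mat : Letter → SL2 | A => Sm | B1 => Rm | B2 => Rm * Rm

def mp : List Letter → SL2
  | [] => 1
  | h :: t => mp t * mat h

-- vector sets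
def Xv (v : Fin 2 → ℤ) : Prop := v 0 * v 1 < 0
def Yv (v : Fin 2 → ℤ) : Prop := 0 < v 0 * v 1

def sSet : Bool → (Fin 2 → ℤ) → Prop | true => Xv | false => Yv
def eSet : Bool → (Fin 2 → ℤ) → Prop | true => Yv | false => Xv

lemma mulVec_Sm (v : Fin 2 → ℤ) : (Sm : Matrix (Fin 2) (Fin 2) ℤ).mulVec v = ![-v 1, v 0] := by
  funext i
  fin_cases i <;> simp [Matrix.mulVec, dotProduct, Fin.sum_univ_two]

lemma mulVec_Rm (v : Fin 2 → ℤ) : (Rm : Matrix (Fin 2) (Fin 2) ℤ).mulVec v = ![-v 1, v 0 - v 1] := by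
  funext i
  fin_cases i <;> simp [Matrix.mulVec, dotProduct, Fin.sum_univ_two] <;> ring

lemma letter_step (g : Letter) (v : Fin 2 → ℤ) (hv : sSet (typ g) v) :
    eSet (typ g) ((mat g : Matrix (Fin 2) (Fin 2) ℤ).mulVec v) := by
  cases g
  · -- A : Yv → Xv
    simp only [mat, typ, sSet, eSet, Yv, Xv] at *
    rw [mulVec_Sm]
    simp only [Matrix.cons_val_zero, Matrix.cons_val_one, Matrix.head_cons]
    nlinarith
  · simp only [mat, typ, sSet, eSet, Yv, Xv] at *
    rw [mulVec_Rm]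
    simp only [Matrix.cons_val_zero, Matrix.cons_val_one, Matrix.head_cons]
    nlinarith [sq_nonneg (v 1), sq_nonneg (v 0)]
  · simp only [mat, typ, sSet, eSet, Yv, Xv] at *
    rw [Matrix.SpecialLinearGroup.coe_mul, ← Matrix.mulVec_mulVec, mulVec_Rm, mulVec_Rm]
    simp only [Matrix.cons_val_zero, Matrix.cons_val_one, Matrix.head_cons]
    nlinarith [sq_nonneg (v 1), sq_nonneg (v 0)]

lemma typ_opp {a b : Letter} (h : diff a b) : typ a = !(typ b) := by
  cases a <;> cases b <;> simp_all [diff, typ]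

lemma sSet_eq_eSet (b : Bool) : sSet (!b) = eSet b := by cases b <;> rfl

lemma key : ∀ (t : List Letter) (h : Letter), List.Chain' diff (h :: t) →
    ∀ v, sSet (typ h) v → eSet (typ ((h :: t).getLast (by simp)))
      ((mp (h :: t) : Matrix (Fin 2) (Fin 2) ℤ).mulVec v) := by
  intro t
  induction t with
  | nil =>
    intro h _ v hv
    simpa [mp, List.getLast] using letter_step h v hv
  | cons h2 t2 ih =>
    intro h hc v hv
    have hd : diff h h2 := (List.isChain_cons_cons.mp hc).1
    have hc2 : List.Chain' diff (h2 :: t2) := (List.isChain_cons_cons.mp hc).2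
    have step : eSet (typ h) ((mat h : Matrix (Fin 2) (Fin 2) ℤ).mulVec v) :=
      letter_step h v hv
    have hv2 : sSet (typ h2) ((mat h : Matrix (Fin 2) (Fin 2) ℤ).mulVec v) := by
      have : typ h2 = !(typ h) := typ_opp (fun e => hd e.symm)
      rw [this, sSet_eq_eSet]
      exact step
    have := ih h2 hc2 _ hv2
    have hm : (mp (h :: h2 :: t2) : Matrix (Fin 2) (Fin 2) ℤ).mulVec v
        = (mp (h2 :: t2) : Matrix (Fin 2) (Fin 2) ℤ).mulVec
            ((mat h : Matrix (Fin 2) (Fin 2) ℤ).mulVec v) := by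
      show ((mp (h2 :: t2) * mat h : SL2) : Matrix (Fin 2) (Fin 2) ℤ).mulVec v = _
      rw [Matrix.SpecialLinearGroup.coe_mul, ← Matrix.mulVec_mulVec]
    rw [hm]
    simpa [List.getLast] using this


-- ## PSL part merged
lemma Sm_sq : Sm ^ 2 = -1 := by
  ext i j
  simp [Sm, pow_two]
  fin_cases i <;> fin_cases j <;> simp [Matrix.mul_apply, Fin.sum_univ_two, ModularGroup.coe_S]

lemma Rm_cube : Rm ^ 3 = 1 := by
  ext i j
  simp only [pow_succ, pow_zero, one_mul, Matrix.SpecialLinearGroup.coe_mul, coe_Rm]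
  fin_cases i <;> fin_cases j <;>
    simp [Matrix.mul_apply, Fin.sum_univ_two, Matrix.SpecialLinearGroup.coe_one]

lemma neg_one_sq' : ((-1 : SL2)) ^ (2:ℤ) = 1 := by
  ext i j
  simp [zpow_two]

lemma neg__root_.one_zpow (k : ℤ) : (-1 : SL2) ^ k = 1 ∨ (-1 : SL2) ^ k = -1 := by
  rcases Int.even_or_odd k with ⟨m, hm⟩ | ⟨m, hm⟩
  · left
    rw [hm, ← two_mul, _root_.zpow_mul, neg_one_sq', _root_.one_zpow]
  · right
    rw [hm, _root_.zpow_add, _root_.zpow_mul, neg_one_sq', _root_.one_zpow, one_mul, zpow_one]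

def N : Subgroup SL2 := Subgroup.zpowers (-1)

lemma neg_one_central (g : SL2) : g * (-1) = (-1) * g := by
  ext i j; simp

instance N_normal : N.Normal := by
  constructor
  intro n hn g
  rcases Subgroup.mem_zpowers_iff.mp hn with ⟨k, hk⟩
  rcases neg__root_.one_zpow k with h | h <;> rw [← hk, h]
  · simpa using N.one_mem
  · have : g * -1 * g⁻¹ = -1 := by rw [neg_one_central, mul_assoc, mul_inv_cancel, mul_one]
    rw [this]; exact Subgroup.mem_zpowers _

abbrev PSL := SL2 ⧸ N

def pr : SL2 →* PSL := QuotientGroup.mk' N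

lemma pr_eq_one_iff {g : SL2} : pr g = 1 ↔ g = 1 ∨ g = -1 := by
  rw [pr, QuotientGroup.mk'_apply, QuotientGroup.eq_one_iff]
  constructor
  · intro h
    rcases Subgroup.mem_zpowers_iff.mp h with ⟨k, hk⟩
    rcases neg__root_.one_zpow k with h' | h' <;> rw [← hk, h']
    · exact Or.inl rfl
    · exact Or.inr rfl
  · rintro (rfl | rfl)
    · exact N.one_mem
    · exact Subgroup.mem_zpowers _



def mq (l : List Letter) : PSL := pr (mp l)

lemma mq_cons (h : Letter) (t : List Letter) : mq (h :: t) = mq t * pr (mat h) := by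
  simp [mq, mp, _root_.map_mul]

lemma mq_nil : mq [] = 1 := by simp [mq, mp]

lemma mq_append_singleton (l : List Letter) (g : Letter) :
    mq (l ++ [g]) = pr (mat g) * mq l := by
  induction l with
  | nil => simp [mq_cons, mq_nil]
  | cons h t ih => rw [List.cons_append, mq_cons, ih, mq_cons, mul_assoc]

lemma pr_Rm_cube : pr Rm * (pr Rm * pr Rm) = 1 := by
  rw [← _root_.map_mul, ← _root_.map_mul]
  have : Rm * (Rm * Rm) = 1 := by calc Rm * (Rm * Rm) = Rm ^ 3 := by rw [pow_succ, pow_two]; group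
      _ = 1 := Rm_cube
  rw [this, _root_.map_one]

lemma key2 (h : Letter) (t : List Letter) (hc : List.Chain' diff (h :: t))
    (h1 : typ h = true) (h2 : typ ((h :: t).getLast (by simp)) = true) :
    mq (h :: t) ≠ 1 := by
  intro hone
  have hm : mp (h :: t) = 1 ∨ mp (h :: t) = -1 := pr_eq_one_iff.mp hone
  have hv0 : sSet (typ h) ![(1 : ℤ), -1] := by
    rw [h1]; show Xv _; simp [Xv]
  have := key t h hc _ hv0
  rw [h2] at this
  have hY : Yv ((mp (h :: t) : Matrix (Fin 2) (Fin 2) ℤ).mulVec ![(1 : ℤ), -1]) := this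
  rcases hm with hm | hm <;> rw [hm] at hY
  · simp [Matrix.one_mulVec, Yv] at hY
  · have : ((-1 : SL2) : Matrix (Fin 2) (Fin 2) ℤ) = -1 := by simp
    rw [this, Matrix.neg_mulVec, Matrix.one_mulVec] at hY
    simp [Yv] at hY

-- inversion of letters
def linv : Letter → Letter | A => A | B1 => B2 | B2 => B1

@[simp] lemma typ_linv (g : Letter) : typ (linv g) = typ g := by cases g <;> rfl

lemma pr_mat_linv (g : Letter) : pr (mat (linv g)) = (pr (mat g))⁻¹ := by
  cases g
  · -- Sm : pr Sm ^2 = 1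
    show pr Sm = (pr Sm)⁻¹
    rw [eq_inv_iff_mul_eq_one, ← _root_.map_mul]
    rw [pr_eq_one_iff]
    right
    rw [← pow_two]; exact Sm_sq
  · show pr (Rm * Rm) = (pr Rm)⁻¹
    rw [eq_inv_iff_mul_eq_one, _root_.map_mul, mul_assoc]
    exact pr_Rm_cube
  · show pr Rm = (pr (Rm * Rm))⁻¹
    rw [eq_inv_iff_mul_eq_one, _root_.map_mul, ← mul_assoc]
    rw [← _root_.map_mul, ← _root_.map_mul]
    have : Rm * Rm * Rm = 1 := by calc Rm * Rm * Rm = Rm ^ 3 := by rw [pow_succ, pow_two]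
      _ = 1 := Rm_cube
    rw [this, _root_.map_one]

def invL (l : List Letter) : List Letter := (l.map linv).reverse

lemma mq_invL (l : List Letter) : mq (invL l) = (mq l)⁻¹ := by
  induction l with
  | nil => simp [invL, mq_nil]
  | cons h t ih =>
    rw [mq_cons, invL, List.map_cons, List.reverse_cons, mq_append_singleton, ← invL, ih,
      pr_mat_linv, _root_.mul_inv_rev]

lemma chain_invL {l : List Letter} (hc : List.Chain' diff l) : List.Chain' diff (invL l) := by
  rw [invL, List.Chain', List.isChain_reverse]
  refine List.isChain_map_of_isChain linv ?_ hc
  intro a b hab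
  show diff (linv b) (linv a)
  simp only [diff, typ_linv]
  exact fun e => hab e.symm

lemma r_pow_three : pr Rm * pr Rm * pr Rm = 1 := by
  rw [mul_assoc]; exact pr_Rm_cube

lemma sandwich_chain (c hd : Letter) (xs : List Letter) (hxs : xs ≠ [])
    (hc : List.Chain' diff xs)
    (hh : ∀ x ∈ xs.head?, typ x = false) (hl : ∀ x ∈ xs.getLast?, typ x = false)
    (htc : typ c = true) (htd : typ hd = true) :
    List.Chain' diff (c :: (xs ++ [hd])) := by
  rw [List.Chain', List.isChain_cons]
  constructor
  · intro y hy
    rw [List.head?_append_of_ne_nil _ hxs] at hy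
    have := hh y hy
    show typ c ≠ typ y
    rw [htc, this]; simp
  · rw [List.isChain_append]
    refine ⟨hc, List.isChain_singleton _, ?_⟩
    intro x hx y hy
    simp only [List.head?_cons, Option.mem_def, Option.some.injEq] at hy
    subst hy
    have := hl x hx
    show typ x ≠ typ hd
    rw [this, htd]; simp

lemma sandwich_getLast? (c hd : Letter) (xs : List Letter) :
    (c :: (xs ++ [hd])).getLast? = some hd := by
  have : c :: (xs ++ [hd]) = (c :: xs) ++ [hd] := by simp
  rw [this, List.getLast?_concat]

lemma key2' (l : List Letter) (hne : l ≠ []) (hc : List.Chain' diff l)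
    (hhead : ∀ x ∈ l.head?, typ x = true) (hlast : ∀ x ∈ l.getLast?, typ x = true) :
    mq l ≠ 1 := by
  obtain ⟨h, t, rfl⟩ := List.exists_cons_of_ne_nil hne
  refine key2 h t hc (hhead h (by simp)) ?_
  exact hlast _ (by rw [List.getLast?_eq_getLast (by simp)]; rfl)

lemma sandwich_mq (c hd : Letter) (xs : List Letter) :
    mq (c :: (xs ++ [hd])) = pr (mat hd) * mq xs * pr (mat c) := by
  rw [mq_cons, mq_append_singleton]

lemma aux_false (l : List Letter) (hne : l ≠ []) (hc : List.Chain' diff l)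
    (hh : ∀ x ∈ l.head?, typ x = false) (h1 : mq l = 1) : False := by
  obtain ⟨h, t, rfl⟩ := List.exists_cons_of_ne_nil hne
  have hth : typ h = false := hh h (by simp)
  by_cases hlast : typ ((h :: t).getLast (by simp)) = false
  · -- sandwich with B2, B1
    have hchain := sandwich_chain B2 B1 (h :: t) (by simp) hc
      hh (by simpa [List.getLast?_eq_getLast] using hlast) rfl rfl
    have hmq : mq (B2 :: ((h :: t) ++ [B1])) = 1 := by
      rw [sandwich_mq, h1, mul_one]
      show pr Rm * pr (Rm * Rm) = 1
      rw [_root_.map_mul, ← mul_assoc]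
      exact r_pow_three
    refine key2' _ (by simp) hchain ?_ ?_ hmq
    · intro x hx
      simp only [List.head?_cons, Option.mem_def, Option.some.injEq] at hx
      subst hx; rfl
    · intro x hx
      rw [sandwich_getLast? B2 B1 (h :: t)] at hx
      simp only [Option.mem_def, Option.some.injEq] at hx
      subst hx; rfl
  · -- last has B type
    have hlast' : typ ((h :: t).getLast (by simp)) = true := by
      simpa using hlast
    -- t ≠ []
    have htne : t ≠ [] := by
      rintro rfl
      simp only [List.getLast_singleton] at hlast'
      rw [hth] at hlast'; exact Bool.false_ne_true hlast'
    set g := t.getLast htne with hg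
    clear_value g
    have hdec : h :: t = (h :: t.dropLast) ++ [g] := by
      simp [hg, List.dropLast_append_getLast htne]
    set xs := h :: t.dropLast with hxs
    have hgt : typ g = true := by
      have : (h :: t).getLast? = some g := by
        rw [hdec]
        have : xs ++ [g] = (h :: t.dropLast) ++ [g] := by rw [hxs]
        rw [this, List.getLast?_concat]
      have h2 := List.getLast?_eq_getLast (l := h :: t) (by simp)
      rw [h2] at this
      simp only [Option.some.injEq] at this
      rw [← this]; exact hlast'
    rw [hdec] at hc h1
    have hchain_xs : List.Chain' diff xs := (List.isChain_append.mp hc).1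
    have hlx : ∀ x ∈ xs.getLast?, typ x = false := by
      intro x hx
      have := (List.isChain_append.mp hc).2.2 x hx g (by simp)
      have : typ x ≠ typ g := this
      rw [hgt] at this
      simpa using this
    have hmq_xs : mq xs = (pr (mat g))⁻¹ := by
      rw [mq_append_singleton] at h1
      rw [eq_inv_iff_mul_eq_one]
      calc mq xs * pr (mat g) = (pr (mat g))⁻¹ * (pr (mat g) * mq xs * pr (mat g)) *
            (pr (mat g))⁻¹ * pr (mat g) := by group
        _ = 1 := by
            rw [show pr (mat g) * mq xs = 1 from h1]
            group
    have hhx : ∀ x ∈ xs.head?, typ x = false := by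
      intro x hx
      simp only [hxs, List.head?_cons, Option.mem_def, Option.some.injEq] at hx
      subst hx; exact hth
    -- choose sandwich letters depending on g
    have main : ∀ c : Letter, typ c = true → pr (mat c) * (pr (mat g))⁻¹ * pr (mat c) = 1 →
        False := by
      intro c htc hcc
      have hchain := sandwich_chain c c xs (by simp [hxs]) hchain_xs hhx hlx htc htc
      have hmq : mq (c :: (xs ++ [c])) = 1 := by
        rw [sandwich_mq, hmq_xs]
        exact hcc
      refine key2' _ (by simp) hchain ?_ ?_ hmq
      · intro x hx
        simp only [List.head?_cons, Option.mem_def, Option.some.injEq] at hx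
        subst hx; exact htc
      · intro x hx
        rw [sandwich_getLast? c c xs] at hx
        simp only [Option.mem_def, Option.some.injEq] at hx
        subst hx; exact htc
    cases g with
    | A => simp [typ] at hgt
    | B1 =>
      refine main B2 rfl ?_
      show pr (Rm * Rm) * (pr Rm)⁻¹ * pr (Rm * Rm) = 1
      rw [_root_.map_mul]
      calc pr Rm * pr Rm * (pr Rm)⁻¹ * (pr Rm * pr Rm) = pr Rm * pr Rm * pr Rm := by group
        _ = 1 := r_pow_three
    | B2 =>
      refine main B1 rfl ?_
      show pr Rm * (pr (Rm * Rm))⁻¹ * pr Rm = 1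
      rw [_root_.map_mul]
      group

theorem normal_mq_eq_one {l : List Letter} (hc : List.Chain' diff l) (h1 : mq l = 1) :
    l = [] := by
  by_contra hne
  obtain ⟨h, t, rfl⟩ := List.exists_cons_of_ne_nil hne
  by_cases hth : typ h = false
  · exact aux_false (h :: t) (by simp) hc
      (by intro x hx; simp only [List.head?_cons, Option.mem_def, Option.some.injEq] at hx;
          subst hx; exact hth) h1
  · have hth' : typ h = true := by simpa using hth
    by_cases hlast : typ ((h :: t).getLast (by simp)) = true
    · exact key2 h t hc hth' hlast h1
    · -- invert
      have hlast' : typ ((h :: t).getLast (by simp)) = false := by simpa using hlast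
      have hcne : invL (h :: t) ≠ [] := by simp [invL]
      refine aux_false (invL (h :: t)) hcne (chain_invL hc) ?_ (by rw [mq_invL, h1, inv_one])
      intro x hx
      -- head of invL = linv of getLast
      have : (invL (h :: t)).head? = some (linv ((h :: t).getLast (by simp))) := by
        rw [invL, List.head?_reverse, List.getLast?_map,
          List.getLast?_eq_getLast (by simp)]
        rfl
      rw [this] at hx
      simp only [Option.mem_def, Option.some.injEq] at hx
      subst hx
      rw [typ_linv]
      exact hlast'


-- ## The group P = ⟨x, y | x² = 1, y³ = 1⟩

def prels : Set (FreeGroup Bool) := {FreeGroup.of false ^ 2, FreeGroup.of true ^ 3}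

abbrev P := PresentedGroup prels

def Xg : P := PresentedGroup.of false
def Yg : P := PresentedGroup.of true

lemma mk_rel_eq_one {r : FreeGroup Bool} (h : r ∈ prels) : PresentedGroup.mk prels r = 1 := by
  rw [PresentedGroup.mk_eq_one_iff]
  exact Subgroup.subset_normalClosure h

lemma Xg_sq : Xg * Xg = 1 := by
  have : PresentedGroup.mk prels (FreeGroup.of false ^ 2) = 1 :=
    mk_rel_eq_one (Or.inl rfl)
  rw [map_pow, pow_two] at this
  exact this

lemma Yg_cube : Yg * (Yg * Yg) = 1 := by
  have h : PresentedGroup.mk prels (FreeGroup.of true ^ 3) = 1 :=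
    mk_rel_eq_one (Or.inr rfl)
  rw [map_pow] at h
  have h2 : Yg ^ 3 = 1 := h
  rw [pow_succ, pow_two, mul_assoc] at h2
  exact h2

def val : Letter → P
  | A => Xg
  | B1 => Yg
  | B2 => Yg * Yg

/-- reversed product: `rp [g₁, …, gₙ] = val gₙ * ⋯ * val g₁`. -/
def rp : List Letter → P
  | [] => 1
  | h :: t => rp t * val h

/-- push a letter onto a reversed normal word, keeping it normal. -/
def push (g : Letter) : List Letter → List Letter
  | [] => [g]
  | h :: t =>
    match g, h with
    | A, A => t
    | A, B1 => A :: B1 :: t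
    | A, B2 => A :: B2 :: t
    | B1, A => B1 :: A :: t
    | B2, A => B2 :: A :: t
    | B1, B1 => B2 :: t
    | B1, B2 => t
    | B2, B1 => t
    | B2, B2 => B1 :: t

lemma rp_push (g : Letter) (l : List Letter) : rp (push g l) = rp l * val g := by
  cases l with
  | nil => simp [push, rp]
  | cons h t =>
    cases g <;> cases h <;>
      simp only [push, rp, val, mul_assoc, Xg_sq, Yg_cube, mul_one]

lemma chain_push (g : Letter) (l : List Letter) (hc : List.Chain' diff l) :
    List.Chain' diff (push g l) := by
  cases l with
  | nil => simp [push, List.Chain']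
  | cons h t =>
    have hct : List.Chain' diff t := hc.tail
    have hrel : ∀ x ∈ t.head?, diff h x := by
      cases t with
      | nil => simp
      | cons a s =>
        intro x hx
        simp only [List.head?_cons, Option.mem_def, Option.some.injEq] at hx
        subst hx
        exact (List.isChain_cons_cons.mp hc).1
    cases g <;> cases h <;>
      simp only [push] <;>
      first
      | exact hct
      | (rw [List.Chain', List.isChain_cons_cons]; exact ⟨by simp [diff, typ], hc⟩)
      | (rw [List.Chain', List.isChain_cons]
         refine ⟨?_, hct⟩
         intro y hy
         have := hrel y hy
         simp only [diff, typ] at this ⊢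
         exact this)

/-- every element of `P` has a normal form. -/
theorem exists_normal (p : P) : ∃ l : List Letter, List.Chain' diff l ∧ rp l = p := by
  refine PresentedGroup.induction_on (C := fun q => ∃ l, List.Chain' diff l ∧ rp l = q) p ?_
  intro w
  induction w using FreeGroup.induction_on with
  | C1 => exact ⟨[], by simp [List.Chain'], by simp [rp]⟩
  | of b =>
    cases b
    · exact ⟨[A], by simp [List.Chain'], by simp [rp, val]; rfl⟩
    · exact ⟨[B1], by simp [List.Chain'], by simp [rp, val]; rfl⟩
  | inv_of b _ =>
    cases b
    · refine ⟨[A], by simp [List.Chain'], ?_⟩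
      simp only [rp, val, one_mul, map_inv]
      rw [eq_comm, inv_eq_iff_mul_eq_one]
      exact (show Xg * Xg = 1 from Xg_sq)
    · refine ⟨[B2], by simp [List.Chain'], ?_⟩
      simp only [rp, val, one_mul, map_inv]
      symm
      rw [inv_eq_iff_mul_eq_one]
      calc PresentedGroup.mk prels (pure true) * (Yg * Yg)
          = Yg * (Yg * Yg) := rfl
        _ = 1 := Yg_cube
  | mul x y hx hy =>
    obtain ⟨l1, hc1, hp1⟩ := hx
    obtain ⟨l2, hc2, hp2⟩ := hy
    refine ⟨l2.foldr push l1, ?_, ?_⟩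
    · clear hp2
      induction l2 with
      | nil => exact hc1
      | cons a s ih => exact chain_push a _ (ih hc2.tail)
    · rw [_root_.map_mul, ← hp1, ← hp2]
      clear hp2 hc2
      induction l2 with
      | nil => simp [rp]
      | cons a s ih =>
        simp only [List.foldr_cons, rp_push, ih, rp, mul_assoc]

-- ## the homomorphism χ : P → PSL

lemma chi_rels : ∀ r ∈ prels, FreeGroup.lift (fun b => if b then pr Rm else pr Sm) r = 1 := by
  intro r hr
  simp only [prels, Set.mem_insert_iff, Set.mem_singleton_iff] at hr
  rcases hr with rfl | rfl
  · rw [map_pow, FreeGroup.lift_apply_of]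
    show (pr Sm) ^ 2 = 1
    rw [pow_two, ← _root_.map_mul, pr_eq_one_iff]
    right
    rw [← pow_two]
    exact Sm_sq
  · rw [map_pow, FreeGroup.lift_apply_of]
    show (pr Rm) ^ 3 = 1
    calc (pr Rm) ^ 3 = pr Rm * pr Rm * pr Rm := by rw [pow_succ, pow_two]
      _ = 1 := r_pow_three

def chi : P →* PSL := PresentedGroup.toGroup chi_rels

@[simp] lemma chi_Xg : chi Xg = pr Sm := by
  have h := PresentedGroup.toGroup.of chi_rels (x := false)
  exact h.trans (if_neg (by decide))
@[simp] lemma chi_Yg : chi Yg = pr Rm := by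
  have h := PresentedGroup.toGroup.of chi_rels (x := true)
  exact h.trans (if_pos rfl)

lemma chi_val (g : Letter) : chi (val g) = pr (mat g) := by
  cases g <;> simp [val, mat, _root_.map_mul]

lemma chi_rp (l : List Letter) : chi (rp l) = mq l := by
  induction l with
  | nil => simp [rp, mq, mp, _root_.map_one]
  | cons h t ih => rw [rp, _root_.map_mul, ih, chi_val, mq_cons]

theorem chi_injective : Function.Injective chi := by
  rw [injective_iff_map_eq_one]
  intro p hp
  obtain ⟨l, hc, hl⟩ := exists_normal p
  have : mq l = 1 := by rw [← chi_rp, hl, hp]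
  have := normal_mq_eq_one hc this
  subst this
  rw [← hl]
  rfl


-- ## Braid group side

abbrev B3 := BraidGroup 3

def s1 : B3 := sigma' 3 1
def s2 : B3 := sigma' 3 2

lemma s1_def : s1 = PresentedGroup.of (⟨0, by norm_num⟩ : Fin (3 - 1)) := by
  rw [s1, sigma', dif_pos (by norm_num)]
  rfl

lemma s2_def : s2 = PresentedGroup.of (⟨1, by norm_num⟩ : Fin (3 - 1)) := by
  rw [s2, sigma', dif_pos (by norm_num)]
  rfl

lemma bmk_rel_eq_one {r : FreeGroup (Fin (3 - 1))} (h : r ∈ braidRels (3 - 1)) :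
    PresentedGroup.mk (braidRels (3 - 1)) r = 1 := by
  rw [PresentedGroup.mk_eq_one_iff]
  exact Subgroup.subset_normalClosure h

lemma brel : s1 * s2 * s1 = s2 * s1 * s2 := by
  have h : (FreeGroup.of (⟨0, by norm_num⟩ : Fin (3 - 1)) * FreeGroup.of ⟨1, by norm_num⟩ *
      FreeGroup.of ⟨0, by norm_num⟩ *
      (FreeGroup.of ⟨1, by norm_num⟩ * FreeGroup.of ⟨0, by norm_num⟩ *
        FreeGroup.of ⟨1, by norm_num⟩)⁻¹) ∈ braidRels (3 - 1) := by
    right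
    exact ⟨⟨0, by norm_num⟩, ⟨1, by norm_num⟩, by norm_num, rfl⟩
  have h2 := bmk_rel_eq_one h
  rw [_root_.map_mul, _root_.map_inv, mul_inv_eq_one] at h2
  rw [s1_def, s2_def]
  simp only [_root_.map_mul] at h2
  exact h2

lemma delta_eq : Delta 3 3 = s2 * s1 * s2 := by
  show (((List.range 2).map fun m => descSeg 3 2 (m + 1)).prod) = _
  rw [show List.range 2 = [0, 1] from rfl]
  simp only [List.map_cons, List.map_nil, List.prod_cons, List.prod_nil, mul_one]
  show descSeg 3 2 1 * descSeg 3 2 2 = _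
  rw [descSeg, descSeg]
  rw [show (2 : ℕ) - 1 + 1 = 2 from rfl, show (2 : ℕ) - 2 + 1 = 1 from rfl]
  rw [show List.range 2 = [0, 1] from rfl, show List.range 1 = [0] from rfl]
  simp only [List.map_cons, List.map_nil, List.prod_cons, List.prod_nil, mul_one]
  show sigma' 3 2 * sigma' 3 1 * sigma' 3 2 = _
  rw [← s1, ← s2]

lemma delta_eq' : Delta 3 3 = s1 * s2 * s1 := by rw [delta_eq, ← brel]

lemma delta_s1 : Delta 3 3 * s1 = s2 * Delta 3 3 := by
  rw [delta_eq]
  calc s2 * s1 * s2 * s1 = s2 * (s1 * s2 * s1) := by group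
    _ = s2 * (s2 * s1 * s2) := by rw [brel]
    _ = s2 * (s2 * s1 * s2) := rfl

lemma delta_s2 : Delta 3 3 * s2 = s1 * Delta 3 3 := by
  rw [delta_eq']
  calc s1 * s2 * s1 * s2 = s1 * (s2 * s1 * s2) := by group
    _ = s1 * (s1 * s2 * s1) := by rw [← brel]

lemma delta_sq : Delta 3 3 ^ 2 = (s1 * s2) ^ 3 := by
  rw [pow_two, delta_eq']
  nth_rewrite 2 [brel]
  rw [pow_succ, pow_two]
  group

lemma delta_sq_comm_s1 : Commute (Delta 3 3 ^ 2) s1 := by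
  show Delta 3 3 ^ 2 * s1 = s1 * Delta 3 3 ^ 2
  rw [pow_two]
  calc Delta 3 3 * Delta 3 3 * s1 = Delta 3 3 * (Delta 3 3 * s1) := by group
    _ = Delta 3 3 * (s2 * Delta 3 3) := by rw [delta_s1]
    _ = (Delta 3 3 * s2) * Delta 3 3 := by group
    _ = s1 * (Delta 3 3 * Delta 3 3) := by rw [delta_s2]; group

lemma delta_sq_comm_s2 : Commute (Delta 3 3 ^ 2) s2 := by
  show Delta 3 3 ^ 2 * s2 = s2 * Delta 3 3 ^ 2
  rw [pow_two]
  calc Delta 3 3 * Delta 3 3 * s2 = Delta 3 3 * (Delta 3 3 * s2) := by group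
    _ = Delta 3 3 * (s1 * Delta 3 3) := by rw [delta_s2]
    _ = (Delta 3 3 * s1) * Delta 3 3 := by group
    _ = s2 * (Delta 3 3 * Delta 3 3) := by rw [delta_s1]; group

-- Δ² is central
lemma delta_sq_comm (g : B3) : Commute (Delta 3 3 ^ 2) g := by
  have : g ∈ Subgroup.centralizer {Delta 3 3 ^ 2} := by
    refine PresentedGroup.generated_by _ _ ?_ g
    intro j
    rw [Subgroup.mem_centralizer_iff]
    intro h hh
    rw [Set.mem_singleton_iff] at hh
    subst hh
    fin_cases j
    · rw [← s1_def]
      exact delta_sq_comm_s1.eq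
    · rw [← s2_def]
      exact delta_sq_comm_s2.eq
  exact Subgroup.mem_centralizer_iff.mp this (Delta 3 3 ^ 2) rfl


-- ## The quotient homomorphism q : B3 → P

lemma Xg_cancel (z : P) : Xg * (Xg * z) = z := by rw [← mul_assoc, Xg_sq, one_mul]

lemma Yg_cancel (z : P) : Yg * (Yg * (Yg * z)) = z := by
  rw [← mul_assoc, ← mul_assoc]
  rw [show Yg * Yg * Yg = 1 by rw [mul_assoc]; exact Yg_cube, one_mul]

def qf : Fin (3 - 1) → P := fun i => if (i : ℕ) = 0 then Yg * Yg * Xg else Xg * (Yg * Yg)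

lemma Xg_inv : Xg⁻¹ = Xg := inv_eq_of_mul_eq_one_right Xg_sq
lemma Yg_inv : Yg⁻¹ = Yg * Yg := inv_eq_of_mul_eq_one_right Yg_cube

lemma q_rels : ∀ r ∈ braidRels (3 - 1), FreeGroup.lift qf r = 1 := by
  rintro r (⟨i, j, hij, rfl⟩ | ⟨i, j, hij, rfl⟩)
  · exfalso
    have := j.isLt
    omega
  · have hi : (i : ℕ) = 0 := by have := j.isLt; omega
    have hj : (j : ℕ) = 1 := by omega
    simp only [_root_.map_mul, _root_.map_inv, FreeGroup.lift_apply_of, qf, hi, hj,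
      if_pos rfl]
    norm_num
    simp only [_root_.mul_inv_rev, Xg_inv, Yg_inv, mul_assoc, Xg_cancel, Yg_cancel,
      Yg_cube, Xg_sq, mul_one, one_mul]

def q : B3 →* P := PresentedGroup.toGroup q_rels

lemma q_s1 : q s1 = Yg * Yg * Xg := by
  rw [s1_def, q, PresentedGroup.toGroup.of]
  rfl

lemma q_s2 : q s2 = Xg * (Yg * Yg) := by
  rw [s2_def, q, PresentedGroup.toGroup.of]
  rfl

lemma q_s1s2 : q (s1 * s2) = Yg := by
  rw [_root_.map_mul, q_s1, q_s2]
  simp only [mul_assoc, Xg_cancel, Yg_cancel, Yg_cube, Xg_sq, mul_one, one_mul]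

lemma q_delta_sq : q (Delta 3 3 ^ 2) = 1 := by
  rw [delta_sq, map_pow, q_s1s2, pow_succ, pow_two, mul_assoc]
  exact Yg_cube

-- ## The quotient B3 / ⟨Δ²⟩ and the retraction

def Z3 : Subgroup B3 := Subgroup.zpowers (Delta 3 3 ^ 2)

instance Z3_normal : Z3.Normal := by
  constructor
  intro n hn g
  rcases Subgroup.mem_zpowers_iff.mp hn with ⟨k, rfl⟩
  have hc : Commute g ((Delta 3 3 ^ 2) ^ k) := ((delta_sq_comm g).symm).zpow_right k
  rw [hc.eq, mul_assoc, mul_inv_cancel, mul_one]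
  exact hn

abbrev BQ := B3 ⧸ Z3

def mkq : B3 →* BQ := QuotientGroup.mk' Z3

lemma mkq_delta_sq : mkq (Delta 3 3 ^ 2) = 1 := by
  rw [mkq, QuotientGroup.mk'_apply, QuotientGroup.eq_one_iff]
  exact Subgroup.mem_zpowers _

lemma r_rels : ∀ r ∈ prels, FreeGroup.lift
    (fun b => if b then mkq (s1 * s2) else mkq (Delta 3 3)) r = 1 := by
  intro r hr
  simp only [prels, Set.mem_insert_iff, Set.mem_singleton_iff] at hr
  rcases hr with rfl | rfl
  · rw [map_pow, FreeGroup.lift_apply_of, if_neg (by decide)]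
    rw [← map_pow]
    exact mkq_delta_sq
  · rw [map_pow, FreeGroup.lift_apply_of, if_pos rfl]
    rw [← map_pow, ← delta_sq]
    exact mkq_delta_sq

def rr : P →* BQ := PresentedGroup.toGroup r_rels

lemma rr_Xg : rr Xg = mkq (Delta 3 3) := by
  have h := PresentedGroup.toGroup.of r_rels (x := false)
  exact h.trans (if_neg (by decide))

lemma rr_Yg : rr Yg = mkq (s1 * s2) := by
  have h := PresentedGroup.toGroup.of r_rels (x := true)
  exact h.trans (if_pos rfl)

lemma rr_q : rr.comp q = mkq := by
  apply PresentedGroup.ext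
  intro i
  fin_cases i
  · simp only [MonoidHom.comp_apply]
    rw [← s1_def, q_s1, _root_.map_mul, _root_.map_mul, rr_Xg, rr_Yg,
      ← _root_.map_mul, ← _root_.map_mul]
    have : s1 * s2 * (s1 * s2) * Delta 3 3 = Delta 3 3 ^ 2 * s1 := by
      rw [delta_sq, delta_eq', pow_succ, pow_two]
      group
    rw [this, _root_.map_mul, mkq_delta_sq, one_mul]
  · simp only [MonoidHom.comp_apply]
    rw [← s2_def, q_s2, _root_.map_mul, _root_.map_mul, rr_Xg, rr_Yg,
      ← _root_.map_mul, ← _root_.map_mul]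
    have : Delta 3 3 * (s1 * s2 * (s1 * s2)) = s2 * Delta 3 3 ^ 2 := by
      rw [delta_sq, delta_eq, pow_succ, pow_two]
      group
    rw [this, _root_.map_mul, mkq_delta_sq, mul_one]

lemma ker_q_le (g : B3) (hg : q g = 1) : g ∈ Z3 := by
  have : mkq g = 1 := by
    rw [← rr_q]
    show rr (q g) = 1
    rw [hg, _root_.map_one]
  rwa [mkq, QuotientGroup.mk'_apply, QuotientGroup.eq_one_iff] at this


-- ## T and its centralizer in PSL

def Tm : SL2 := ModularGroup.T

lemma RRS_eq_T : Rm * Rm * Sm = Tm := by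
  ext i j
  simp only [Matrix.SpecialLinearGroup.coe_mul, coe_Rm, coe_Sm, Tm, ModularGroup.coe_T]
  fin_cases i <;> fin_cases j <;>
    simp [Matrix.mul_apply, Fin.sum_univ_two]

lemma chi_q_s1 : chi (q s1) = pr Tm := by
  rw [q_s1, _root_.map_mul, _root_.map_mul, chi_Xg, chi_Yg, ← _root_.map_mul, ← _root_.map_mul,
    RRS_eq_T]

lemma trace_coe_T : Matrix.trace ((Tm : Matrix (Fin 2) (Fin 2) ℤ)) = 2 := by
  simp [Tm, ModularGroup.coe_T, Matrix.trace_fin_two]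

lemma coe_T_zpow (n : ℤ) : ((Tm ^ n : SL2) : Matrix (Fin 2) (Fin 2) ℤ) = !![1, n; 0, 1] :=
  ModularGroup.coe_T_zpow n

/-- centralizer of `pr Tm` in `PSL`. -/
lemma psl_centralizer {t : PSL} (h : Commute t (pr Tm)) : ∃ n : ℤ, t = (pr Tm) ^ n := by
  obtain ⟨M, rfl⟩ := QuotientGroup.mk'_surjective N t
  have hM : pr (M * Tm * M⁻¹ * Tm⁻¹) = 1 := by
    have hh : pr M * pr Tm = pr Tm * pr M := h
    rw [_root_.map_mul, _root_.map_mul, _root_.map_mul, _root_.map_inv, _root_.map_inv, hh]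
    group
  rcases pr_eq_one_iff.mp hM with hM1 | hM1
  · -- M commutes with Tm
    have hcomm : M * Tm = Tm * M := by
      have := congrArg (fun z => z * Tm * M) hM1
      simpa [mul_assoc] using this
    have hentries := congrArg (fun (A : SL2) => (A : Matrix (Fin 2) (Fin 2) ℤ)) hcomm
    simp only [Matrix.SpecialLinearGroup.coe_mul, Tm, ModularGroup.coe_T] at hentries
    set m := (M : Matrix (Fin 2) (Fin 2) ℤ) with hm
    have h00 := congrFun (congrFun hentries 0) 0
    have h01 := congrFun (congrFun hentries 0) 1
    have h11 := congrFun (congrFun hentries 1) 1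
    simp [Matrix.mul_apply, Fin.sum_univ_two] at h00 h01 h11
    have hdet : m 0 0 * m 1 1 - m 0 1 * m 1 0 = 1 := by
      have h2 := M.2
      rw [Matrix.det_fin_two] at h2
      linarith [h2]
    have hc0 : m 1 0 = 0 := h00
    have had : m 0 0 = m 1 1 := by linarith [h01]
    have hsq : m 0 0 * m 0 0 = 1 := by
      rw [← had] at hdet
      rw [hc0] at hdet
      linarith [hdet]
    rcases Int.eq_one_or_neg_one_of_mul_eq_one' hsq with ⟨h1, _⟩ | ⟨h1, _⟩
    · refine ⟨m 0 1, ?_⟩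
      have hMT : M = Tm ^ (m 0 1) := by
        apply Subtype.ext
        rw [coe_T_zpow]
        apply Matrix.ext
        intro i j
        fin_cases i <;> fin_cases j <;>
          simp [← hm, h1, hc0, ← had]
      rw [hMT]
      rw [QuotientGroup.mk'_apply, ← QuotientGroup.mk'_apply, map_zpow]
      rfl
    · refine ⟨-(m 0 1), ?_⟩
      have hMT : M = (-1) * Tm ^ (-(m 0 1)) := by
        apply Subtype.ext
        rw [Matrix.SpecialLinearGroup.coe_mul, coe_T_zpow]
        apply Matrix.ext
        intro i j
        have hneg : ((-1 : SL2) : Matrix (Fin 2) (Fin 2) ℤ) = -1 := by simp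
        rw [hneg]
        fin_cases i <;> fin_cases j <;>
          simp [← hm, h1, hc0, ← had]
      rw [hMT]
      show pr (-1 * Tm ^ (-(m 0 1))) = pr Tm ^ (-(m 0 1))
      rw [_root_.map_mul, map_zpow]
      have : pr (-1 : SL2) = 1 := pr_eq_one_iff.mpr (Or.inr rfl)
      rw [this, one_mul]
  · -- impossible by trace
    exfalso
    have hconj : M * Tm * M⁻¹ = -1 * Tm := by
      have := congrArg (fun z => z * Tm) hM1
      simpa [mul_assoc] using this
    have htr := congrArg (fun (A : SL2) => Matrix.trace (A : Matrix (Fin 2) (Fin 2) ℤ)) hconj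
    simp only [Matrix.SpecialLinearGroup.coe_mul] at htr
    rw [Matrix.trace_mul_comm] at htr
    have hinv : ((M⁻¹ : SL2) : Matrix (Fin 2) (Fin 2) ℤ) * ((M : SL2) : Matrix (Fin 2) (Fin 2) ℤ)
        = 1 := by
      rw [← Matrix.SpecialLinearGroup.coe_mul, inv_mul_cancel]
      rfl
    rw [← mul_assoc, hinv, one_mul] at htr
    have hneg : ((-1 : SL2) : Matrix (Fin 2) (Fin 2) ℤ) = -1 := by simp
    rw [hneg, trace_coe_T] at htr
    rw [show ((-1 : Matrix (Fin 2) (Fin 2) ℤ)) * (Tm : Matrix (Fin 2) (Fin 2) ℤ)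
      = -(Tm : Matrix (Fin 2) (Fin 2) ℤ) from by rw [neg_one_mul]] at htr
    rw [Matrix.trace_neg, trace_coe_T] at htr
    norm_num at htr


-- ## abelianization homomorphism

lemma e_rels : ∀ r ∈ braidRels (3 - 1),
    FreeGroup.lift (fun _ : Fin (3 - 1) => Multiplicative.ofAdd (1 : ℤ)) r = 1 := by
  rintro r (⟨i, j, hij, rfl⟩ | ⟨i, j, hij, rfl⟩) <;>
    simp only [_root_.map_mul, _root_.map_inv, FreeGroup.lift_apply_of] <;>
    group

def eh : B3 →* Multiplicative ℤ := PresentedGroup.toGroup e_rels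

lemma eh_s1 : eh s1 = Multiplicative.ofAdd (1 : ℤ) := by
  rw [s1_def, eh, PresentedGroup.toGroup.of]

lemma eh_s2 : eh s2 = Multiplicative.ofAdd (1 : ℤ) := by
  rw [s2_def, eh, PresentedGroup.toGroup.of]

lemma eh_delta_sq : eh (Delta 3 3 ^ 2) = Multiplicative.ofAdd (6 : ℤ) := by
  rw [delta_sq, map_pow, _root_.map_mul, eh_s1, eh_s2]
  rfl

-- ## f and its properties

def fhom : Multiplicative (ℤ × ℤ) →* B3 where
  toFun := fun p => (Delta 3 3 ^ 2) ^ (p.toAdd.1) * s1 ^ (p.toAdd.2)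
  map_one' := by simp
  map_mul' := by
    intro p q
    have hc : Commute (Delta 3 3 ^ 2) s1 := delta_sq_comm_s1
    have h1 : Commute ((Delta 3 3 ^ 2) ^ (q.toAdd.1)) (s1 ^ (p.toAdd.2)) :=
      (hc.zpow_zpow _ _)
    show (Delta 3 3 ^ 2) ^ (p.toAdd.1 + q.toAdd.1) * s1 ^ (p.toAdd.2 + q.toAdd.2) = _
    rw [_root_.zpow_add, _root_.zpow_add]
    calc (Delta 3 3 ^ 2) ^ p.toAdd.1 * (Delta 3 3 ^ 2) ^ q.toAdd.1 *
          (s1 ^ p.toAdd.2 * s1 ^ q.toAdd.2)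
        = (Delta 3 3 ^ 2) ^ p.toAdd.1 * ((Delta 3 3 ^ 2) ^ q.toAdd.1 * s1 ^ p.toAdd.2) *
          s1 ^ q.toAdd.2 := by group
      _ = (Delta 3 3 ^ 2) ^ p.toAdd.1 * (s1 ^ p.toAdd.2 * (Delta 3 3 ^ 2) ^ q.toAdd.1) *
          s1 ^ q.toAdd.2 := by rw [h1.eq]
      _ = _ := by group

lemma fhom_apply (u v : ℤ) :
    fhom (Multiplicative.ofAdd (u, v)) = (Delta 3 3 ^ 2) ^ u * s1 ^ v := rfl

lemma Tm_zpow_eq_one {v : ℤ} (h : pr (Tm ^ v) = 1) : v = 0 := by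
  rcases pr_eq_one_iff.mp h with h1 | h1
  · have hmat : ((Tm ^ v : SL2) : Matrix (Fin 2) (Fin 2) ℤ)
        = ((1 : SL2) : Matrix (Fin 2) (Fin 2) ℤ) := by rw [h1]
    rw [coe_T_zpow] at hmat
    have := congrFun (congrFun hmat 0) 1
    simpa using this
  · exfalso
    have hmat : ((Tm ^ v : SL2) : Matrix (Fin 2) (Fin 2) ℤ)
        = ((-1 : SL2) : Matrix (Fin 2) (Fin 2) ℤ) := by rw [h1]
    have hneg : ((-1 : SL2) : Matrix (Fin 2) (Fin 2) ℤ) = -1 := by simp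
    rw [coe_T_zpow, hneg] at hmat
    have := congrFun (congrFun hmat 0) 0
    simpa using this

lemma fhom_inj : Function.Injective fhom := by
  rw [injective_iff_map_eq_one]
  intro p hp
  obtain ⟨u, v⟩ := p
  have hp' : (Delta 3 3 ^ 2) ^ u * s1 ^ v = 1 := hp
  -- first, v = 0 via χ ∘ q
  have hq : chi (q ((Delta 3 3 ^ 2) ^ u * s1 ^ v)) = 1 := by rw [hp']; simp
  rw [_root_.map_mul, _root_.map_mul, map_zpow, map_zpow, q_delta_sq, map_zpow, map_zpow,
    chi_q_s1] at hq
  simp only [_root_.map_one, _root_.one_zpow, one_mul] at hq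
  have hv : v = 0 := by
    apply Tm_zpow_eq_one
    rw [map_zpow]
    exact hq
  subst hv
  rw [zpow_zero, mul_one] at hp'
  -- now u = 0 via eh
  have hu : eh ((Delta 3 3 ^ 2) ^ u) = 1 := by rw [hp', _root_.map_one]
  rw [map_zpow, eh_delta_sq] at hu
  have := congrArg Multiplicative.toAdd hu
  simp only [toAdd_zpow, toAdd_ofAdd, toAdd_one, smul_eq_mul] at this
  have hu0 : u = 0 := by omega
  subst hu0
  rfl

-- ## braidSub and centralizer

lemma braidSub_eq : braidSub 3 2 = Subgroup.closure {s1} := by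
  rw [braidSub]
  congr 1
  ext β
  constructor
  · rintro ⟨i, hi, rfl⟩
    have h0 : i = ⟨0, by norm_num⟩ := by
      apply Fin.ext
      simpa using (by omega : (i : ℕ) = 0)
    rw [h0]
    exact s1_def.symm
  · rintro rfl
    exact ⟨⟨0, by norm_num⟩, by norm_num, s1_def⟩

lemma cent_iff (g : B3) :
    g ∈ Subgroup.centralizer (braidSub 3 2 : Set B3) ↔ Commute s1 g := by
  rw [braidSub_eq]
  constructor
  · intro h
    exact h s1 (Subgroup.subset_closure rfl)
  · intro h x hx
    refine Subgroup.closure_induction (p := fun x _ => x * g = g * x) ?_ ?_ ?_ ?_ hx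
    · rintro y rfl
      exact h
    · group
    · intro a b _ _ ha hb
      rw [mul_assoc, hb, ← mul_assoc, ha, mul_assoc]
    · intro a _ ha
      have : Commute a g := ha
      exact this.inv_left.eq

lemma range_eq : fhom.range = Subgroup.centralizer (braidSub 3 2 : Set B3) := by
  ext g
  rw [cent_iff]
  constructor
  · rintro ⟨p, rfl⟩
    obtain ⟨u, v⟩ := p
    show Commute s1 ((Delta 3 3 ^ 2) ^ u * s1 ^ v)
    exact Commute.mul_right ((delta_sq_comm_s1.symm).zpow_right u)
      ((Commute.refl s1).zpow_right v)
  · intro h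
    -- main argument
    have hcomm : Commute (chi (q g)) (pr Tm) := by
      rw [← chi_q_s1]
      have : Commute (q g) (q s1) := by
        show q g * q s1 = q s1 * q g
        rw [← _root_.map_mul, ← _root_.map_mul, ← h.eq]
      exact this.map chi
    obtain ⟨n, hn⟩ := psl_centralizer hcomm
    have : chi (q (g * s1 ^ (-n))) = 1 := by
      rw [_root_.map_mul, _root_.map_mul, map_zpow, map_zpow, chi_q_s1, hn]
      rw [← _root_.zpow_add]
      simp
    have hq1 : q (g * s1 ^ (-n)) = 1 := chi_injective (by rw [this, _root_.map_one])
    obtain ⟨u, hu⟩ := Subgroup.mem_zpowers_iff.mp (ker_q_le _ hq1)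
    refine ⟨Multiplicative.ofAdd (u, n), ?_⟩
    rw [fhom_apply, hu]
    group

theorem main :
    letI σ₁ : BraidGroup 3 := sigma' 3 1
    letI σ₂ : BraidGroup 3 := sigma' 3 2
    Delta 3 3 ^ 2 = (σ₁ * σ₂) ^ 3 ∧
    Commute (Delta 3 3 ^ 2) σ₁ ∧
    ∃ f : Multiplicative (ℤ × ℤ) →* BraidGroup 3,
      Function.Injective f ∧
      (∀ u v : ℤ, f (Multiplicative.ofAdd (u, v)) = (Delta 3 3 ^ 2) ^ u * σ₁ ^ v) ∧
      f.range = Subgroup.centralizer (braidSub 3 2 : Set (BraidGroup 3)) :=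
  ⟨delta_sq, delta_sq_comm_s1, fhom, fhom_inj, fhom_apply, range_eq⟩

end Stmt13

/-- In `B₃`, `Δ₃² = (σ₁σ₂)³` commutes with `σ₁`, and `(u,v) ↦ Δ₃^{2u} σ₁^v` is an injective
homomorphism `ℤ × ℤ → B₃` whose image is the centralizer of `B₂` in `B₃`. -/
theorem stmt_13 :
    letI σ₁ : BraidGroup 3 := sigma' 3 1
    letI σ₂ : BraidGroup 3 := sigma' 3 2
    Delta 3 3 ^ 2 = (σ₁ * σ₂) ^ 3 ∧
    Commute (Delta 3 3 ^ 2) σ₁ ∧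
    ∃ f : Multiplicative (ℤ × ℤ) →* BraidGroup 3,
      Function.Injective f ∧
      (∀ u v : ℤ, f (Multiplicative.ofAdd (u, v)) = (Delta 3 3 ^ 2) ^ u * σ₁ ^ v) ∧
      f.range = Subgroup.centralizer (braidSub 3 2 : Set (BraidGroup 3)) :=
  Stmt13.main
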